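/- arXiv:1905.06387 — 2 statements merged into one kernel-verified Lean document; each statement's English description precedes it below -/
import Mathlib

section
/- Let b = 1/2 and define the weight φ(x) = (b² + x²)²/(b² x⁴) for x > 0. Then for every x > 0, the identity (1/(2φ(x)))·(d/dx)(x·φ(x)) + b/(b² + x²) − 1 = −1/2 holds. -/
open Real

noncomputable def b : ℝ := 1/2

noncomputable def φ (x : ℝ) : ℝ := (b^2 + x^2)^2 / (b^2 * x^4)

lemma hb : b = 1/2 := rfl

lemma hasDerivAt_xφ (x : ℝ) (hx : 0 < x) :
    HasDerivAt (fun y => y * φ y)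
      (φ x + x * ((4*x*(b^2+x^2) * (b^2*x^4) - (b^2+x^2)^2 * (4*b^2*x^3)) / (b^2*x^4)^2)) x := by
  have hden : b^2 * x^4 ≠ 0 := by
    have : (b:ℝ) ≠ 0 := by rw [hb]; norm_num
    positivity
  have hu : HasDerivAt (fun y : ℝ => (b^2 + y^2)^2) (4*x*(b^2+x^2)) x := by
    have h1 : HasDerivAt (fun y : ℝ => b^2 + y^2) (2*x) x := by
      simpa using ((hasDerivAt_pow 2 x).const_add (b^2))
    have := h1.pow 2
    exact this.congr_deriv (by push_cast; ring)
  have hv : HasDerivAt (fun y : ℝ => b^2 * y^4) (4*b^2*x^3) x := by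
    have := (hasDerivAt_pow 4 x).const_mul (b^2)
    exact this.congr_deriv (by push_cast; ring)
  have hφ : HasDerivAt φ
      ((4*x*(b^2+x^2) * (b^2*x^4) - (b^2+x^2)^2 * (4*b^2*x^3)) / (b^2*x^4)^2) x :=
    hu.div hv hden
  have := (hasDerivAt_id' x).mul hφ
  simp only [one_mul] at this
  exact this

theorem damping_L2 (x : ℝ) (hx : 0 < x) :
    (1 / (2 * φ x)) * deriv (fun y => y * φ y) x + b / (b^2 + x^2) - 1 = -(1/2) := by
  rw [(hasDerivAt_xφ x hx).deriv]
  have hx0 : x ≠ 0 := hx.ne'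
  have hb2 : b^2 + x^2 ≠ 0 := by rw [hb]; positivity
  have hbne : (b:ℝ) ≠ 0 := by rw [hb]; norm_num
  unfold φ
  rw [hb] at *
  field_simp
  ring
end

section
/- Let b = 1/2 and define ψ(x) = (b² + x²)²/(b² x²) for x > 0. Then for every x > 0, (1/(2ψ(x)))·(d/dx)(x·ψ(x)) − 2 + b/(b² + x²) = −1/2. -/
open Real

noncomputable def ψ (x : ℝ) : ℝ := (b^2 + x^2)^2 / (b^2 * x^2)

theorem damping_H1 (x : ℝ) (hx : 0 < x) :
    (1 / (2 * ψ x)) * deriv (fun y => y * ψ y) x - 2 + b / (b^2 + x^2) = -(1/2) := by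
  have hb : b = 1/2 := rfl
  have hx0 : x ≠ 0 := ne_of_gt hx
  have hden : b^2 * x ≠ 0 := by
    rw [hb]; positivity
  have hsq : b^2 + x^2 ≠ 0 := by rw [hb]; positivity
  have h1 : HasDerivAt (fun y : ℝ => (b^2 + y^2)^2) (2*(b^2+x^2)*(2*x)) x := by
    have : HasDerivAt (fun y : ℝ => b^2 + y^2) (2*x) x := by
      simpa using ((hasDerivAt_pow 2 x).const_add (b^2))
    simpa using this.fun_pow 2
  have h2 : HasDerivAt (fun y : ℝ => b^2 * y) (b^2) x := by
    simpa using (hasDerivAt_id x).const_mul (b^2)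
  have hg : HasDerivAt (fun y : ℝ => (b^2 + y^2)^2 / (b^2 * y))
      ((2*(b^2+x^2)*(2*x) * (b^2*x) - (b^2+x^2)^2 * b^2) / (b^2*x)^2) x := h1.div h2 hden
  have heq : (fun y : ℝ => y * ψ y) =ᶠ[nhds x] (fun y : ℝ => (b^2 + y^2)^2 / (b^2 * y)) := by
    filter_upwards [eventually_ne_nhds hx0] with y hy
    unfold ψ
    field_simp
  have hderiv : deriv (fun y : ℝ => y * ψ y) x
      = (2*(b^2+x^2)*(2*x) * (b^2*x) - (b^2+x^2)^2 * b^2) / (b^2*x)^2 := by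
    rw [heq.deriv_eq, hg.deriv]
  rw [hderiv]
  unfold ψ
  rw [hb]
  have h14 : (1:ℝ)/4 + x^2 ≠ 0 := by positivity
  field_simp
  ring
end
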